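/- Let N : ℕ → ℕ be a function that is polynomially bounded, i.e., there exist constants C > 0 and k ∈ ℕ with N(d) ≤ C · d^k for all d ≥ 1. For each dimension d ≥ 1, let X₁, …, X_{N(d)}, x be N(d)+1 independent random points, each uniformly distributed on the closed unit ball of ℝ^d, and let p_d denote the probability that x lies in the convex hull of {X₁, …, X_{N(d)}}. Then p_d → 0 as d → ∞. -/

import Mathlib

open MeasureTheory Filter

/-- The uniform probability measure on the closed unit ball of `ℝ^d`. -/
noncomputable def uniformBall (d : ℕ) : Measure (EuclideanSpace ℝ (Fin d)) :=
  (volume (Metric.closedBall (0 : EuclideanSpace ℝ (Fin d)) 1))⁻¹ •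
    volume.restrict (Metric.closedBall (0 : EuclideanSpace ℝ (Fin d)) 1)

/-- The probability that a new uniform sample from the unit ball of `ℝ^d` lies in the
convex hull of `n` i.i.d. uniform samples from that ball. -/
noncomputable def interpProb (d n : ℕ) : ENNReal :=
  ((Measure.pi fun _ : Fin n => uniformBall d).prod (uniformBall d))
    {p | p.2 ∈ convexHull ℝ (Set.range p.1)}

open scoped RealInnerProductSpace

section aux

variable (d : ℕ)

lemma volBall_ne_zero : volume (Metric.closedBall (0 : EuclideanSpace ℝ (Fin d)) 1) ≠ 0 :=
  (Metric.measure_closedBall_pos _ _ one_pos).ne'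

lemma volBall_ne_top : volume (Metric.closedBall (0 : EuclideanSpace ℝ (Fin d)) 1) ≠ ⊤ :=
  (MeasureTheory.measure_closedBall_lt_top).ne

lemma uniformBall_apply {s : Set (EuclideanSpace ℝ (Fin d))} (hs : MeasurableSet s) :
    uniformBall d s =
      (volume (Metric.closedBall (0 : EuclideanSpace ℝ (Fin d)) 1))⁻¹ *
        volume (s ∩ Metric.closedBall 0 1) := by
  rw [uniformBall, Measure.smul_apply, Measure.restrict_apply hs, smul_eq_mul]

instance uniformBall_isProb : IsProbabilityMeasure (uniformBall d) := by
  constructor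
  rw [uniformBall_apply d MeasurableSet.univ, Set.univ_inter,
    ENNReal.inv_mul_cancel (volBall_ne_zero d) (volBall_ne_top d)]

/-- volume of a closed ball of radius `r` relative to the unit ball. -/
lemma uniformBall_le_closedBall {r : ℝ} (hr : 0 ≤ r) (u : EuclideanSpace ℝ (Fin d))
    {s : Set (EuclideanSpace ℝ (Fin d))} (hs : MeasurableSet s)
    (h : s ∩ Metric.closedBall 0 1 ⊆ Metric.closedBall u r) :
    uniformBall d s ≤ ENNReal.ofReal (r ^ d) := by
  rw [uniformBall_apply d hs]
  have hball : volume (Metric.closedBall u r) =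
      ENNReal.ofReal (r ^ d) * volume (Metric.closedBall (0 : EuclideanSpace ℝ (Fin d)) 1) := by
    rw [Measure.addHaar_closedBall' _ _ hr]
    congr 2
    simp [finrank_euclideanSpace_fin]
  calc (volume (Metric.closedBall (0 : EuclideanSpace ℝ (Fin d)) 1))⁻¹ *
        volume (s ∩ Metric.closedBall 0 1)
      ≤ (volume (Metric.closedBall (0 : EuclideanSpace ℝ (Fin d)) 1))⁻¹ *
        volume (Metric.closedBall u r) := mul_le_mul_right (measure_mono h) _
    _ = ENNReal.ofReal (r ^ d) := by
        rw [hball, ← mul_assoc, mul_comm _ (ENNReal.ofReal (r ^ d)), mul_assoc,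
          mul_comm (volume _)⁻¹, ENNReal.mul_inv_cancel (volBall_ne_zero d) (volBall_ne_top d),
          mul_one]

lemma sqrt2div2_sq : (Real.sqrt 2 / 2) ^ 2 = 1 / 2 := by
  rw [div_pow, Real.sq_sqrt (by norm_num : (2:ℝ) ≥ 0)]
  norm_num

/-- Cap bound: points of the unit ball with `⟪x, y⟫ ≥ ‖x‖²` (for `‖x‖ ≥ 3/4`) lie in a ball
of radius `√2/2`. -/
lemma cap_bound {x : EuclideanSpace ℝ (Fin d)} (hx : (3/4 : ℝ) ≤ ‖x‖) :
    uniformBall d {y | ‖x‖ ^ 2 ≤ ⟪x, y⟫} ≤ ENNReal.ofReal ((Real.sqrt 2 / 2) ^ d) := by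
  have hx0 : x ≠ 0 := by
    intro h; rw [h, norm_zero] at hx; norm_num at hx
  have hnx : (0:ℝ) < ‖x‖ := lt_of_lt_of_le (by norm_num) hx
  set u : EuclideanSpace ℝ (Fin d) := ‖x‖⁻¹ • x with hu
  have hun : ‖u‖ = 1 := by
    rw [hu, norm_smul, norm_inv, norm_norm, inv_mul_cancel₀ hnx.ne']
  have hmeas : MeasurableSet {y : EuclideanSpace ℝ (Fin d) | ‖x‖ ^ 2 ≤ ⟪x, y⟫} := by
    have : Continuous fun y : EuclideanSpace ℝ (Fin d) => ⟪x, y⟫ :=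
      continuous_const.inner continuous_id
    exact measurableSet_le measurable_const this.measurable
  apply uniformBall_le_closedBall d (by positivity) u hmeas
  rintro y ⟨hy1, hy2⟩
  simp only [Set.mem_setOf_eq] at hy1
  rw [Metric.mem_closedBall] at hy2 ⊢
  rw [dist_zero_right] at hy2
  rw [dist_eq_norm]
  have hinner : (3/4 : ℝ) ≤ ⟪u, y⟫ := by
    rw [hu, real_inner_smul_left]
    have h1 : ‖x‖ ^ 2 ≤ ⟪x, y⟫ := hy1
    have h2 : ‖x‖⁻¹ * ‖x‖ ^ 2 ≤ ‖x‖⁻¹ * ⟪x, y⟫ := by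
      apply mul_le_mul_of_nonneg_left h1 (by positivity)
    calc (3/4 : ℝ) ≤ ‖x‖ := hx
      _ = ‖x‖⁻¹ * ‖x‖ ^ 2 := by field_simp
      _ ≤ ‖x‖⁻¹ * ⟪x, y⟫ := h2
  have hsq : ‖y - u‖ ^ 2 ≤ 1 / 2 := by
    rw [norm_sub_sq_real, hun]
    nlinarith [real_inner_comm u y, norm_nonneg y, hinner]
  have h1 : ‖y - u‖ = Real.sqrt (‖y - u‖ ^ 2) := (Real.sqrt_sq (norm_nonneg _)).symm
  rw [h1, show Real.sqrt 2 / 2 = Real.sqrt ((Real.sqrt 2 / 2)^2) from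
    (Real.sqrt_sq (by positivity)).symm, sqrt2div2_sq]
  exact Real.sqrt_le_sqrt hsq

lemma exists_inner_ge {n : ℕ} (f : Fin n → EuclideanSpace ℝ (Fin d))
    (x : EuclideanSpace ℝ (Fin d)) (hx : x ∈ convexHull ℝ (Set.range f)) :
    ∃ i, ‖x‖ ^ 2 ≤ ⟪x, f i⟫ := by
  by_contra h
  push_neg at h
  have hconv : Convex ℝ {y : EuclideanSpace ℝ (Fin d) | ⟪x, y⟫ < ‖x‖ ^ 2} := by
    apply convex_halfSpace_lt
    exact ⟨fun a b => inner_add_right _ _ _, fun c a => real_inner_smul_right _ _ _⟩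
  have hsub : Set.range f ⊆ {y | ⟪x, y⟫ < ‖x‖ ^ 2} := by
    rintro _ ⟨i, rfl⟩; exact h i
  have := convexHull_min hsub hconv hx
  simp only [Set.mem_setOf_eq, real_inner_self_eq_norm_sq] at this
  exact lt_irrefl _ this

/-- The key quantitative bound. -/
lemma interpProb_le (n : ℕ) :
    interpProb d n ≤
      ENNReal.ofReal ((3/4 : ℝ) ^ d) + n * ENNReal.ofReal ((Real.sqrt 2 / 2) ^ d) := by
  classical
  set E := EuclideanSpace ℝ (Fin d)
  set μ := Measure.pi fun _ : Fin n => uniformBall d with hμ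
  set ν := uniformBall d with hν
  set B : Fin n → Set ((Fin n → E) × E) :=
    fun i => {p | (3/4 : ℝ) ≤ ‖p.2‖ ∧ ‖p.2‖ ^ 2 ≤ ⟪p.2, p.1 i⟫} with hB
  have key : {p : (Fin n → E) × E | p.2 ∈ convexHull ℝ (Set.range p.1)} ⊆
      (Set.univ ×ˢ Metric.ball (0 : E) (3/4)) ∪ ⋃ i : Fin n, B i := by
    rintro ⟨f, x⟩ hp
    by_cases hx : ‖x‖ < 3/4
    · left; exact ⟨Set.mem_univ _, by simpa [Metric.mem_ball, dist_zero_right] using hx⟩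
    · right
      push_neg at hx
      obtain ⟨i, hi⟩ := exists_inner_ge d f x hp
      exact Set.mem_iUnion.2 ⟨i, hx, hi⟩
  have hBmeas : ∀ i, MeasurableSet (B i) := by
    intro i
    have hc1 : Continuous fun p : (Fin n → E) × E => ‖p.2‖ := continuous_snd.norm
    have hc2 : Continuous fun p : (Fin n → E) × E => ⟪p.2, p.1 i⟫ :=
      continuous_inner.comp (continuous_snd.prodMk ((continuous_apply i).comp continuous_fst))
    exact ((isClosed_le continuous_const hc1).inter
      (isClosed_le (hc1.pow 2) hc2)).measurableSet
  have hA : μ.prod ν (Set.univ ×ˢ Metric.ball (0 : E) (3/4)) ≤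
      ENNReal.ofReal ((3/4 : ℝ) ^ d) := by
    rw [Measure.prod_prod, measure_univ, one_mul]
    have : ν (Metric.ball (0 : E) (3/4)) ≤ ν (Metric.closedBall (0 : E) (3/4)) :=
      measure_mono Metric.ball_subset_closedBall
    refine this.trans ?_
    have h1 : Metric.closedBall (0 : E) (3/4) ∩ Metric.closedBall 0 1 =
        Metric.closedBall (0 : E) (3/4) :=
      Set.inter_eq_self_of_subset_left (Metric.closedBall_subset_closedBall (by norm_num))
    exact uniformBall_le_closedBall d (by norm_num) 0 measurableSet_closedBall
      (by rw [h1])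
  have hBi : ∀ i, μ.prod ν (B i) ≤ ENNReal.ofReal ((Real.sqrt 2 / 2) ^ d) := by
    intro i
    rw [Measure.prod_apply_symm (hBmeas i)]
    have hle : ∀ x : E, μ ((fun f => (f, x)) ⁻¹' B i) ≤
        ENNReal.ofReal ((Real.sqrt 2 / 2) ^ d) := by
      intro x
      by_cases hx : (3/4 : ℝ) ≤ ‖x‖
      · have hset : (fun f : Fin n → E => (f, x)) ⁻¹' B i =
            Function.eval i ⁻¹' {y : E | ‖x‖ ^ 2 ≤ ⟪x, y⟫} := by
          ext f; simp [hB, Function.eval, hx]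
        rw [hset, ← Set.univ_pi_update_univ, hμ, Measure.pi_pi]
        have hprod : ∀ j : Fin n, j ≠ i →
            uniformBall d (Function.update (fun _ => Set.univ) i
              {y : E | ‖x‖ ^ 2 ≤ ⟪x, y⟫} j) = 1 := by
          intro j hj
          rw [Function.update_of_ne hj]
          exact measure_univ
        rw [Finset.prod_eq_single i (fun j _ hj => hprod j hj) (by simp)]
        rw [Function.update_self]
        exact cap_bound d hx
      · have hset : (fun f : Fin n → E => (f, x)) ⁻¹' B i = ∅ := by
          ext f; simp [hB, hx]
        rw [hset]
        simp
    calc ∫⁻ x, μ ((fun f => (f, x)) ⁻¹' B i) ∂ν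
        ≤ ∫⁻ _, ENNReal.ofReal ((Real.sqrt 2 / 2) ^ d) ∂ν := lintegral_mono hle
      _ = ENNReal.ofReal ((Real.sqrt 2 / 2) ^ d) := by
          rw [lintegral_const, measure_univ, mul_one]
  calc interpProb d n
      ≤ μ.prod ν ((Set.univ ×ˢ Metric.ball (0 : E) (3/4)) ∪ ⋃ i : Fin n, B i) :=
        measure_mono key
    _ ≤ μ.prod ν (Set.univ ×ˢ Metric.ball (0 : E) (3/4)) +
        μ.prod ν (⋃ i : Fin n, B i) := measure_union_le _ _
    _ ≤ ENNReal.ofReal ((3/4 : ℝ) ^ d) + ∑ i : Fin n, μ.prod ν (B i) :=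
        add_le_add hA (measure_iUnion_fintype_le _ _)
    _ ≤ ENNReal.ofReal ((3/4 : ℝ) ^ d) +
        ∑ _i : Fin n, ENNReal.ofReal ((Real.sqrt 2 / 2) ^ d) :=
        add_le_add le_rfl (Finset.sum_le_sum fun i _ => hBi i)
    _ = ENNReal.ofReal ((3/4 : ℝ) ^ d) + n * ENNReal.ofReal ((Real.sqrt 2 / 2) ^ d) := by
        rw [Finset.sum_const, Finset.card_univ, Fintype.card_fin, nsmul_eq_mul]

end aux

theorem interpolation_never_happens_poly (N : ℕ → ℕ)
    (hN : ∃ C : ℝ, 0 < C ∧ ∃ k : ℕ, ∀ d : ℕ, 1 ≤ d → (N d : ℝ) ≤ C * (d : ℝ) ^ k) :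
    Tendsto (fun d : ℕ => interpProb d (N d)) atTop (nhds 0) := by
  obtain ⟨C, hC, k, hNk⟩ := hN
  have hr0 : (0:ℝ) ≤ Real.sqrt 2 / 2 := by positivity
  have hr1 : Real.sqrt 2 / 2 < 1 := by
    have : Real.sqrt 2 < 2 := by
      nlinarith [Real.sq_sqrt (by norm_num : (2:ℝ) ≥ 0), Real.sqrt_nonneg 2]
    linarith
  have hg : Tendsto (fun d : ℕ => (3/4 : ℝ) ^ d + N d * (Real.sqrt 2 / 2) ^ d)
      atTop (nhds 0) := by
    have h1 : Tendsto (fun d : ℕ => (3/4 : ℝ) ^ d) atTop (nhds 0) :=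
      tendsto_pow_atTop_nhds_zero_of_lt_one (by norm_num) (by norm_num)
    have h2 : Tendsto (fun d : ℕ => (N d : ℝ) * (Real.sqrt 2 / 2) ^ d) atTop (nhds 0) := by
      apply squeeze_zero' (Eventually.of_forall fun d => by positivity)
        (g := fun d : ℕ => C * ((d:ℝ) ^ k * (Real.sqrt 2 / 2) ^ d))
      · filter_upwards [eventually_ge_atTop 1] with d hd
        have := hNk d hd
        have hp : (0:ℝ) ≤ (Real.sqrt 2 / 2) ^ d := by positivity
        nlinarith
      · have := (tendsto_pow_const_mul_const_pow_of_lt_one k hr0 hr1).const_mul C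
        simpa using this
    simpa using h1.add h2
  apply tendsto_of_tendsto_of_tendsto_of_le_of_le'
    (tendsto_const_nhds : Tendsto (fun _ : ℕ => (0 : ENNReal)) atTop (nhds 0))
    (show Tendsto (fun d : ℕ =>
        ENNReal.ofReal ((3/4 : ℝ) ^ d + N d * (Real.sqrt 2 / 2) ^ d)) atTop (nhds 0) by
      simpa using ENNReal.tendsto_ofReal hg)
  · exact Eventually.of_forall fun d => zero_le
  · apply Eventually.of_forall
    intro d
    refine (interpProb_le d (N d)).trans (le_of_eq ?_)
    rw [ENNReal.ofReal_add (by positivity) (by positivity), ENNReal.ofReal_mul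
      (by positivity), ENNReal.ofReal_natCast]
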